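/- Fix real constants k, l > 0 with k > 4 + 4l, and define f(s) = −exp(k/(s−3)) for s ∈ [1,3). Then for every s ∈ [1,3): (i) f(s) < 0, (ii) f'(s) > 0, (iii) f''(s) < 0, and (iv) s·f''(s) + l·f'(s) < 0. -/

import Mathlib

lemma aux_hasDerivAt_f (k x : ℝ) (hx : x ≠ 3) :
    HasDerivAt (fun s : ℝ => -Real.exp (k / (s - 3)))
      (Real.exp (k / (x - 3)) * (k / (x - 3) ^ 2)) x := by
  have hx' : x - 3 ≠ 0 := sub_ne_zero.mpr hx
  have h1 : HasDerivAt (fun s : ℝ => s - 3) 1 x := (hasDerivAt_id x).sub_const 3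
  have h2 : HasDerivAt (fun s : ℝ => k / (s - 3)) (k * (-(1 / (x - 3) ^ 2))) x := by
    simpa [div_eq_mul_inv] using (h1.inv hx').const_mul k
  have h3 := (h2.exp).fun_neg
  refine h3.congr_deriv ?_
  field_simp

lemma aux_hasDerivAt_g (k x : ℝ) (hx : x ≠ 3) :
    HasDerivAt (fun s : ℝ => Real.exp (k / (s - 3)) * (k / (s - 3) ^ 2))
      (Real.exp (k / (x - 3)) * k * (-k - 2 * (x - 3)) / (x - 3) ^ 4) x := by
  have hx' : x - 3 ≠ 0 := sub_ne_zero.mpr hx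
  have hx2 : (x - 3) ^ 2 ≠ 0 := pow_ne_zero _ hx'
  have h1 : HasDerivAt (fun s : ℝ => s - 3) 1 x := (hasDerivAt_id x).sub_const 3
  have h2 : HasDerivAt (fun s : ℝ => k / (s - 3)) (k * (-(1 / (x - 3) ^ 2))) x := by
    simpa [div_eq_mul_inv] using (h1.inv hx').const_mul k
  have hsq : HasDerivAt (fun s : ℝ => (s - 3) ^ 2) (2 * (x - 3)) x := by
    simpa using h1.fun_pow 2
  have hinv : HasDerivAt (fun s : ℝ => ((s - 3) ^ 2)⁻¹)
      (-(2 * (x - 3)) / ((x - 3) ^ 2) ^ 2) x := hsq.inv hx2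
  have hv : HasDerivAt (fun s : ℝ => k / (s - 3) ^ 2)
      (k * (-(2 * (x - 3)) / ((x - 3) ^ 2) ^ 2)) x := by
    simpa [div_eq_mul_inv] using hinv.const_mul k
  have := (h2.exp).fun_mul hv
  refine this.congr_deriv ?_
  field_simp
  ring

theorem stmt_3 (k l : ℝ) (hl : 0 < l) (hk : 4 + 4 * l < k) :
    ∀ s ∈ Set.Ico (1 : ℝ) 3,
      (fun s : ℝ => -Real.exp (k / (s - 3))) s < 0 ∧
      0 < deriv (fun s : ℝ => -Real.exp (k / (s - 3))) s ∧
      deriv (deriv (fun s : ℝ => -Real.exp (k / (s - 3)))) s < 0 ∧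
      s * deriv (deriv (fun s : ℝ => -Real.exp (k / (s - 3)))) s +
        l * deriv (fun s : ℝ => -Real.exp (k / (s - 3))) s < 0 := by
  intro s hs
  obtain ⟨hs1, hs3⟩ := hs
  have hk0 : (0 : ℝ) < k := by linarith
  have hsne : s ≠ 3 := ne_of_lt hs3
  have hd : s - 3 ≠ 0 := sub_ne_zero.mpr hsne
  have hd4 : (0 : ℝ) < (s - 3) ^ 4 := by positivity
  have hd2 : (0 : ℝ) < (s - 3) ^ 2 := by positivity
  have he : (0 : ℝ) < Real.exp (k / (s - 3)) := Real.exp_pos _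
  -- first derivative
  have hderiv1 : deriv (fun s : ℝ => -Real.exp (k / (s - 3))) s
      = Real.exp (k / (s - 3)) * (k / (s - 3) ^ 2) := (aux_hasDerivAt_f k s hsne).deriv
  -- deriv f agrees with g near s
  have hev : deriv (fun s : ℝ => -Real.exp (k / (s - 3)))
      =ᶠ[nhds s] (fun x : ℝ => Real.exp (k / (x - 3)) * (k / (x - 3) ^ 2)) := by
    have hopen : {x : ℝ | x ≠ 3} ∈ nhds s := isOpen_ne.mem_nhds hsne
    filter_upwards [hopen] with x hx
    exact (aux_hasDerivAt_f k x hx).deriv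
  have hderiv2 : deriv (deriv (fun s : ℝ => -Real.exp (k / (s - 3)))) s
      = Real.exp (k / (s - 3)) * k * (-k - 2 * (s - 3)) / (s - 3) ^ 4 := by
    rw [hev.deriv_eq]
    exact (aux_hasDerivAt_g k s hsne).deriv
  refine ⟨by simpa using he, ?_, ?_, ?_⟩
  · rw [hderiv1]; positivity
  · rw [hderiv2]
    apply div_neg_of_neg_of_pos _ hd4
    have : -k - 2 * (s - 3) < 0 := by linarith
    exact mul_neg_of_pos_of_neg (by positivity) this
  · rw [hderiv1, hderiv2]
    have hfac : s * (Real.exp (k / (s - 3)) * k * (-k - 2 * (s - 3)) / (s - 3) ^ 4)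
        + l * (Real.exp (k / (s - 3)) * (k / (s - 3) ^ 2))
        = (Real.exp (k / (s - 3)) * k / (s - 3) ^ 4)
          * (s * (-k - 2 * (s - 3)) + l * (s - 3) ^ 2) := by
      field_simp
    rw [hfac]
    have hE : s * (-k - 2 * (s - 3)) + l * (s - 3) ^ 2 < 0 := by
      nlinarith [mul_nonneg (by linarith : (0:ℝ) ≤ k - 2 * (3 - s)) (by linarith : (0:ℝ) ≤ s - 1),
        mul_nonneg hl.le (by nlinarith : (0:ℝ) ≤ 4 - (3 - s) ^ 2)]
    exact mul_neg_of_pos_of_neg (by positivity) hE
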